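/- Let u : ℝ³ → ℝ³ and p : ℝ³ → ℝ be twice continuously differentiable and satisfy the steady incompressible Euler equation (u·∇)u = −∇p. Let φ : I → ℝ³ be a C³ arclength streamline (φ′(s) = u(φ(s))/|u(φ(s))|, u(φ(s)) ≠ 0) with curvature κ(s) = |φ″(s)| > 0, unit tangent τ = φ′, unit normal n = φ″/κ, binormal b = τ × n, and torsion T defined by b′ = −T n. Then for all s ∈ I: −(Hess p)(φ(s))[τ(s), b(s)] = T(s) κ(s) |u(φ(s))|². (This is the second identity of the paper's Lemma rewriting the Euler equations via curvature and torsion: T κ |u|² = ∂_{z̄} D_t|u|.) -/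

import Mathlib

open RealInnerProductSpace


/-- Cross product on `EuclideanSpace ℝ (Fin 3)`. -/
noncomputable def cross3 (v w : EuclideanSpace ℝ (Fin 3)) : EuclideanSpace ℝ (Fin 3) :=
  (WithLp.equiv 2 (Fin 3 → ℝ)).symm
    ![v 1 * w 2 - v 2 * w 1, v 2 * w 0 - v 0 * w 2, v 0 * w 1 - v 1 * w 0]

lemma inner_cross3_left (v w : EuclideanSpace ℝ (Fin 3)) :
    ⟪v, cross3 v w⟫ = 0 := by
  simp [cross3, PiLp.inner_apply, Fin.sum_univ_three, WithLp.equiv_symm_apply, PiLp.toLp_apply,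
    RCLike.inner_apply]
  ring

lemma inner_cross3_right (v w : EuclideanSpace ℝ (Fin 3)) :
    ⟪w, cross3 v w⟫ = 0 := by
  simp [cross3, PiLp.inner_apply, Fin.sum_univ_three, WithLp.equiv_symm_apply, PiLp.toLp_apply,
    RCLike.inner_apply]
  ring

lemma fderiv_eq_inner_gradient (p : EuclideanSpace ℝ (Fin 3) → ℝ) (x v : EuclideanSpace ℝ (Fin 3)) :
    fderiv ℝ p x v = ⟪gradient p x, v⟫ := by
  rw [gradient, InnerProductSpace.toDual_symm_apply]

/-- Second curvature/torsion identity for the steady Euler equations along a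
C³ arclength streamline: `−(Hess p)[τ, b] = T κ |u|²` (the paper's
`T κ |u|² = ∂_{z̄} D_t|u|`), the torsion `T` being defined by `b′ = −T n`. -/
theorem euler_torsion_identity_binormal
    (u : EuclideanSpace ℝ (Fin 3) → EuclideanSpace ℝ (Fin 3))
    (p : EuclideanSpace ℝ (Fin 3) → ℝ)
    (hu : ContDiff ℝ 2 u) (hp : ContDiff ℝ 2 p)
    (heuler : ∀ x, fderiv ℝ u x (u x) = - gradient p x)
    (hdiv : ∀ x, LinearMap.trace ℝ (EuclideanSpace ℝ (Fin 3))
      ((fderiv ℝ u x).toLinearMap) = 0)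
    (I : Set ℝ) (hI : IsOpen I)
    (φ φ' φ'' φ''' : ℝ → EuclideanSpace ℝ (Fin 3))
    (hφ' : ∀ s ∈ I, HasDerivAt φ (φ' s) s)
    (hφ'' : ∀ s ∈ I, HasDerivAt φ' (φ'' s) s)
    (hφ''' : ∀ s ∈ I, HasDerivAt φ'' (φ''' s) s)
    (hune : ∀ s ∈ I, u (φ s) ≠ 0)
    (hstream : ∀ s ∈ I, φ' s = ‖u (φ s)‖⁻¹ • u (φ s))
    (κ : ℝ → ℝ) (hκ : ∀ s ∈ I, κ s = ‖φ'' s‖) (hκpos : ∀ s ∈ I, 0 < κ s)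
    (τ n b : ℝ → EuclideanSpace ℝ (Fin 3))
    (hτ : ∀ s ∈ I, τ s = φ' s) (hn : ∀ s ∈ I, n s = (κ s)⁻¹ • φ'' s)
    (hb : ∀ s ∈ I, b s = cross3 (τ s) (n s))
    (T : ℝ → ℝ)
    (hT : ∀ s ∈ I, HasDerivAt b (-(T s) • n s) s) :
    ∀ s ∈ I,
      -((fderiv ℝ (fderiv ℝ p) (φ s) (τ s)) (b s))
        = T s * κ s * ‖u (φ s)‖ ^ 2 := by
  -- basic facts
  have hqpos : ∀ t ∈ I, (0:ℝ) < ‖u (φ t)‖ := fun t ht => norm_pos_iff.mpr (hune t ht)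
  have hunit : ∀ t ∈ I, ‖φ' t‖ = 1 := by
    intro t ht
    rw [hstream t ht, norm_smul, norm_inv, norm_norm,
      inv_mul_cancel₀ (hqpos t ht).ne']
  have huφ : ∀ t ∈ I, u (φ t) = ‖u (φ t)‖ • φ' t := by
    intro t ht
    rw [hstream t ht, smul_smul, mul_inv_cancel₀ (hqpos t ht).ne', one_smul]
  -- r t = ⟪u(φ t), φ' t⟫ = ‖u(φ t)‖ on I
  set r : ℝ → ℝ := fun t => ⟪u (φ t), φ' t⟫ with hr_def
  have hr_eq : ∀ t ∈ I, r t = ‖u (φ t)‖ := by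
    intro t ht
    have : r t = ‖u (φ t)‖ * ⟪φ' t, φ' t⟫ := by
      simp only [hr_def]
      nth_rewrite 1 [huφ t ht]
      rw [real_inner_smul_left]
    rw [this, real_inner_self_eq_norm_sq, hunit t ht]
    ring
  have huφ' : ∀ t ∈ I, u (φ t) = r t • φ' t := by
    intro t ht; rw [hr_eq t ht]; exact huφ t ht
  -- derivative of u ∘ φ
  have hw : ∀ t ∈ I, HasDerivAt (fun x => u (φ x)) (fderiv ℝ u (φ t) (φ' t)) t := by
    intro t ht
    exact ((hu.differentiable (by norm_num) (φ t)).hasFDerivAt).comp_hasDerivAt t (hφ' t ht)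
  -- derivative of r
  have hr' : ∀ t ∈ I, HasDerivAt r
      (⟪u (φ t), φ'' t⟫ + ⟪fderiv ℝ u (φ t) (φ' t), φ' t⟫) t := by
    intro t ht
    exact HasDerivAt.inner ℝ (hw t ht) (hφ'' t ht)
  intro s hs
  set q : ℝ := ‖u (φ s)‖ with hq_def
  have hq : 0 < q := hqpos s hs
  have hκs := hκpos s hs
  -- ⟪φ', φ''⟫ = 0 at s
  have hττ : ⟪φ' s, φ'' s⟫ = 0 := by
    have h1 : HasDerivAt (fun t => ⟪φ' t, φ' t⟫)
        (⟪φ' s, φ'' s⟫ + ⟪φ'' s, φ' s⟫) s :=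
      HasDerivAt.inner ℝ (hφ'' s hs) (hφ'' s hs)
    have heq : (fun t => ⟪φ' t, φ' t⟫) =ᶠ[nhds s] fun _ => (1:ℝ) := by
      filter_upwards [hI.mem_nhds hs] with t ht
      rw [real_inner_self_eq_norm_sq, hunit t ht]; norm_num
    have h2 : HasDerivAt (fun _ : ℝ => (1:ℝ))
        (⟪φ' s, φ'' s⟫ + ⟪φ'' s, φ' s⟫) s := h1.congr_of_eventuallyEq heq.symm
    have h3 := h2.unique (hasDerivAt_const s 1)
    have h4 := real_inner_comm (φ' s) (φ'' s)
    linarith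
  -- expression for gradient p (φ s)
  set r' : ℝ := ⟪u (φ s), φ'' s⟫ + ⟪fderiv ℝ u (φ s) (φ' s), φ' s⟫ with hr'_def
  have hw2 : HasDerivAt (fun t => u (φ t)) (r s • φ'' s + r' • φ' s) s := by
    have h1 : HasDerivAt (fun t => r t • φ' t) (r s • φ'' s + r' • φ' s) s :=
      (hr' s hs).smul (hφ'' s hs)
    refine h1.congr_of_eventuallyEq ?_
    filter_upwards [hI.mem_nhds hs] with t ht
    exact huφ' t ht
  have hderiv_eq : fderiv ℝ u (φ s) (φ' s) = r s • φ'' s + r' • φ' s :=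
    (hw s hs).unique hw2
  have hgrad : gradient p (φ s) = -(q • (r s • φ'' s + r' • φ' s)) := by
    have h1 : q • fderiv ℝ u (φ s) (φ' s) = - gradient p (φ s) := by
      rw [hstream s hs, map_smul, heuler, smul_smul, mul_inv_cancel₀ hq.ne', one_smul]
    rw [← hderiv_eq, h1, neg_neg]
  -- inner products with gradient
  have hbs := hb s hs
  have hns := hn s hs
  have hτs := hτ s hs
  have hφ''n : φ'' s = κ s • n s := by
    rw [hns, smul_smul, mul_inv_cancel₀ hκs.ne', one_smul]
  have hgb : ∀ t ∈ I, ⟪gradient p (φ t), b t⟫ = 0 := by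
    intro t ht
    -- same computation at arbitrary t
    set r't : ℝ := ⟪u (φ t), φ'' t⟫ + ⟪fderiv ℝ u (φ t) (φ' t), φ' t⟫
    have hw2t : HasDerivAt (fun x => u (φ x)) (r t • φ'' t + r't • φ' t) t := by
      have h1 : HasDerivAt (fun x => r x • φ' x) (r t • φ'' t + r't • φ' t) t :=
        (hr' t ht).smul (hφ'' t ht)
      refine h1.congr_of_eventuallyEq ?_
      filter_upwards [hI.mem_nhds ht] with x hx
      exact huφ' x hx
    have hderiv_eqt : fderiv ℝ u (φ t) (φ' t) = r t • φ'' t + r't • φ' t :=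
      (hw t ht).unique hw2t
    have hgradt : gradient p (φ t) = -(‖u (φ t)‖ • (r t • φ'' t + r't • φ' t)) := by
      have h1 : ‖u (φ t)‖ • fderiv ℝ u (φ t) (φ' t) = - gradient p (φ t) := by
        rw [hstream t ht, map_smul, heuler, smul_smul,
          mul_inv_cancel₀ (hqpos t ht).ne', one_smul]
      rw [← hderiv_eqt, h1, neg_neg]
    have hb1 : ⟪φ' t, b t⟫ = 0 := by
      rw [hb t ht, ← hτ t ht]; exact inner_cross3_left _ _
    have hb2 : ⟪φ'' t, b t⟫ = 0 := by
      have : φ'' t = κ t • n t := by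
        rw [hn t ht, smul_smul, mul_inv_cancel₀ (hκpos t ht).ne', one_smul]
      rw [hb t ht, this, real_inner_smul_left, inner_cross3_right]
      ring
    rw [hgradt, inner_neg_left, real_inner_smul_left, inner_add_left,
      real_inner_smul_left, real_inner_smul_left, hb1, hb2]
    ring
  have hgn : ⟪gradient p (φ s), n s⟫ = -(q ^ 2 * κ s) := by
    have hn1 : ⟪φ' s, n s⟫ = 0 := by
      rw [hns, real_inner_smul_right, hττ]; ring
    have hn2 : ⟪φ'' s, n s⟫ = κ s := by
      rw [hns, real_inner_smul_right, real_inner_self_eq_norm_sq, ← hκ s hs]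
      field_simp
    rw [hgrad, inner_neg_left, real_inner_smul_left, inner_add_left,
      real_inner_smul_left, real_inner_smul_left, hn1, hn2, hr_eq s hs, ← hq_def]
    ring
  -- the function g = fderiv p (φ ·) (b ·) vanishes on I
  have hpfd : ContDiff ℝ 1 (fderiv ℝ p) := hp.fderiv_right (le_refl 2)
  have hA : HasDerivAt (fun t => fderiv ℝ p (φ t))
      (fderiv ℝ (fderiv ℝ p) (φ s) (φ' s)) s :=
    ((hpfd.differentiable (by norm_num) (φ s)).hasFDerivAt).comp_hasDerivAt s (hφ' s hs)
  have hg : HasDerivAt (fun t => fderiv ℝ p (φ t) (b t))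
      (fderiv ℝ (fderiv ℝ p) (φ s) (φ' s) (b s) + fderiv ℝ p (φ s) (-(T s) • n s)) s :=
    hA.clm_apply (hT s hs)
  have hg0 : HasDerivAt (fun _ : ℝ => (0:ℝ))
      (fderiv ℝ (fderiv ℝ p) (φ s) (φ' s) (b s) + fderiv ℝ p (φ s) (-(T s) • n s)) s := by
    refine hg.congr_of_eventuallyEq ?_
    filter_upwards [hI.mem_nhds hs] with t ht
    rw [fderiv_eq_inner_gradient, hgb t ht]
  have hzero := hg0.unique (hasDerivAt_const s 0)
  have hsecond : fderiv ℝ p (φ s) (-(T s) • n s) = T s * (q ^ 2 * κ s) := by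
    rw [map_smul, fderiv_eq_inner_gradient, hgn]
    simp only [smul_eq_mul]
    ring
  rw [hτs]
  have : fderiv ℝ (fderiv ℝ p) (φ s) (φ' s) (b s) = -(T s * (q ^ 2 * κ s)) := by
    rw [hsecond] at hzero; linarith
  rw [this]
  ring
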